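/- arXiv:math-ph/0408054 — 5 statements merged into one kernel-verified Lean document; each statement's English description precedes it below -/
import Mathlib

section
/- For t > 0 and κ > 0, the solution of the half-line wave problem with Robin boundary condition applied to initial data f (extended by 0 to negative arguments) given by u(t,x) = ½[f(x-t) + f(x+t) + f(t-x)] - κ·θ(t-x)·∫_0^{t-x} e^{-κ(t-x-y)} f(y) dy satisfies the wave equation ∂²u/∂t² = ∂²u/∂x² in the region where t - x ≠ 0 and all arguments of f avoid nonsmooth points, assuming f is C². -/
open MeasureTheory Real

noncomputable def Gfun (κ : ℝ) (f : ℝ → ℝ) : ℝ → ℝ :=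
  fun s => κ * (Real.exp (-κ * s) * ∫ y in (0:ℝ)..s, Real.exp (κ * y) * f y)

lemma hasDerivAt_Gfun (κ : ℝ) (f : ℝ → ℝ) (hf : Continuous f) (s : ℝ) :
    HasDerivAt (Gfun κ f) (κ * f s - κ * Gfun κ f s) s := by
  have hc : Continuous fun y => Real.exp (κ * y) * f y := by fun_prop
  have hI : HasDerivAt (fun u => ∫ y in (0:ℝ)..u, Real.exp (κ * y) * f y)
      (Real.exp (κ * s) * f s) s :=
    intervalIntegral.integral_hasDerivAt_right (hc.intervalIntegrable _ _)
      (hc.stronglyMeasurableAtFilter _ _) hc.continuousAt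
  have hE : HasDerivAt (fun u : ℝ => Real.exp (-κ * u)) (Real.exp (-κ * s) * (-κ)) s := by
    simpa using ((hasDerivAt_id s).const_mul (-κ)).exp
  have h := (hE.mul hI).const_mul κ
  have hexp : Real.exp (-κ * s) * Real.exp (κ * s) = 1 := by
    rw [← Real.exp_add]; simp
  refine h.congr_deriv ?_
  simp only [Gfun]
  linear_combination (κ * f s) * hexp

lemma ite_eq_Gfun (κ : ℝ) (f : ℝ → ℝ) (hzero : ∀ y ≤ (0:ℝ), f y = 0) (a : ℝ) :
    κ * (if 0 < a then ∫ y in (0:ℝ)..a, Real.exp (-κ * (a - y)) * f y else 0)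
      = Gfun κ f a := by
  by_cases h : 0 < a
  · simp only [if_pos h, Gfun]
    congr 1
    rw [← intervalIntegral.integral_const_mul]
    apply intervalIntegral.integral_congr
    intro y _
    show Real.exp (-κ * (a - y)) * f y = Real.exp (-κ * a) * (Real.exp (κ * y) * f y)
    rw [← mul_assoc, ← Real.exp_add]
    congr 2
    ring
  · push_neg at h
    simp only [if_neg (not_lt.mpr h), Gfun]
    have : (∫ y in (0:ℝ)..a, Real.exp (κ * y) * f y) = 0 := by
      have : ∀ y ∈ Set.uIcc (0:ℝ) a, Real.exp (κ * y) * f y = 0 := by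
        intro y hy
        have hy0 : y ≤ 0 := by
          rcases Set.mem_uIcc.mp hy with ⟨h1, h2⟩ | ⟨h1, h2⟩ <;> linarith
        simp [hzero y hy0]
      calc (∫ y in (0:ℝ)..a, Real.exp (κ * y) * f y)
          = ∫ _y in (0:ℝ)..a, (0:ℝ) := intervalIntegral.integral_congr this
        _ = 0 := by simp
    rw [this]; ring

/-- The solution of the half-line wave problem with Robin boundary condition:
`u(t,x) = ½[f(x-t) + f(x+t) + f(t-x)] - κ θ(t-x) ∫_0^{t-x} e^{-κ(t-x-y)} f y dy`
satisfies the wave equation `u_tt = u_xx` on `{t > 0, x > 0, t ≠ x}`, for `f` of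
class `C²` vanishing on `(-∞,0]`. -/
theorem robin_wave_solution (κ : ℝ) (hκ : 0 < κ) (f : ℝ → ℝ)
    (hf : ContDiff ℝ 2 f) (hzero : ∀ y ≤ (0:ℝ), f y = 0) :
    ∀ t x : ℝ, 0 < t → 0 < x → t ≠ x →
      (deriv (fun s => deriv (fun s' =>
          (f (x - s') + f (x + s') + f (s' - x)) / 2 -
            κ * (if 0 < s' - x then
              ∫ y in (0:ℝ)..(s' - x), Real.exp (-κ * (s' - x - y)) * f y else 0)) s) t
        =
       deriv (fun z => deriv (fun z' =>
          (f (z' - t) + f (z' + t) + f (t - z')) / 2 -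
            κ * (if 0 < t - z' then
              ∫ y in (0:ℝ)..(t - z'), Real.exp (-κ * (t - z' - y)) * f y else 0)) z) x) := by
  intro t x ht hx htx
  simp only [ite_eq_Gfun κ f hzero]
  set f1 := deriv f with hf1def
  set f2 := deriv f1 with hf2def
  have hfd : Differentiable ℝ f := hf.differentiable (by norm_num)
  have hf1c : ContDiff ℝ 1 f1 := by
    have h2 : ContDiff ℝ (1 + 1) f := by norm_num; exact_mod_cast hf
    exact (contDiff_succ_iff_deriv.mp h2).2.2
  have hf1d : Differentiable ℝ f1 := hf1c.differentiable (by norm_num)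
  have hDf : ∀ s, HasDerivAt f (f1 s) s := fun s => (hfd s).hasDerivAt
  have hDf1 : ∀ s, HasDerivAt f1 (f2 s) s := fun s => (hf1d s).hasDerivAt
  set G := Gfun κ f with hGdef
  set V : ℝ → ℝ := fun s => κ * f s - κ * G s with hVdef
  have hDG : ∀ s, HasDerivAt G (V s) s := fun s => hasDerivAt_Gfun κ f hf.continuous s
  have hDV : ∀ s, HasDerivAt V (κ * f1 s - κ * V s) s := fun s => by
    exact ((hDf s).const_mul κ).sub ((hDG s).const_mul κ)
  -- LHS
  have hinnerL : ∀ s, HasDerivAt (fun s' =>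
      (f (x - s') + f (x + s') + f (s' - x)) / 2 - G (s' - x))
      ((-f1 (x - s) + f1 (x + s) + f1 (s - x)) / 2 - V (s - x)) s := by
    intro s
    have h1 : HasDerivAt (fun s' => f (x - s')) (-f1 (x - s)) s := by
      simpa [Function.comp_def] using (hDf (x - s)).comp s ((hasDerivAt_id s).const_sub x)
    have h2 : HasDerivAt (fun s' => f (x + s')) (f1 (x + s)) s := by
      simpa [Function.comp_def] using (hDf (x + s)).comp s ((hasDerivAt_id s).const_add x)
    have h3 : HasDerivAt (fun s' => f (s' - x)) (f1 (s - x)) s := by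
      simpa [Function.comp_def] using (hDf (s - x)).comp s ((hasDerivAt_id s).sub_const x)
    have h4 : HasDerivAt (fun s' => G (s' - x)) (V (s - x)) s := by
      simpa [Function.comp_def] using (hDG (s - x)).comp s ((hasDerivAt_id s).sub_const x)
    exact (((h1.add h2).add h3).div_const 2).sub h4
  have eL : deriv (fun s => deriv (fun s' =>
      (f (x - s') + f (x + s') + f (s' - x)) / 2 - G (s' - x)) s) t
      = (f2 (x - t) + f2 (x + t) + f2 (t - x)) / 2 - (κ * f1 (t - x) - κ * V (t - x)) := by
    have hfun : (fun s => deriv (fun s' =>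
        (f (x - s') + f (x + s') + f (s' - x)) / 2 - G (s' - x)) s)
        = fun s => (-f1 (x - s) + f1 (x + s) + f1 (s - x)) / 2 - V (s - x) :=
      funext fun s => (hinnerL s).deriv
    rw [hfun]
    have h1 : HasDerivAt (fun s => -f1 (x - s)) (f2 (x - t)) t := by
      have := ((hDf1 (x - t)).comp t ((hasDerivAt_id t).const_sub x)).neg
      simpa [Function.comp_def, Pi.neg_def] using this
    have h2 : HasDerivAt (fun s => f1 (x + s)) (f2 (x + t)) t := by
      simpa [Function.comp_def] using (hDf1 (x + t)).comp t ((hasDerivAt_id t).const_add x)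
    have h3 : HasDerivAt (fun s => f1 (s - x)) (f2 (t - x)) t := by
      simpa [Function.comp_def] using (hDf1 (t - x)).comp t ((hasDerivAt_id t).sub_const x)
    have h4 : HasDerivAt (fun s => V (s - x)) (κ * f1 (t - x) - κ * V (t - x)) t := by
      simpa [Function.comp_def] using (hDV (t - x)).comp t ((hasDerivAt_id t).sub_const x)
    exact ((((h1.add h2).add h3).div_const 2).sub h4).deriv
  -- RHS
  have hinnerR : ∀ z, HasDerivAt (fun z' =>
      (f (z' - t) + f (z' + t) + f (t - z')) / 2 - G (t - z'))
      ((f1 (z - t) + f1 (z + t) - f1 (t - z)) / 2 + V (t - z)) z := by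
    intro z
    have h1 : HasDerivAt (fun z' => f (z' - t)) (f1 (z - t)) z := by
      simpa [Function.comp_def] using (hDf (z - t)).comp z ((hasDerivAt_id z).sub_const t)
    have h2 : HasDerivAt (fun z' => f (z' + t)) (f1 (z + t)) z := by
      simpa [Function.comp_def] using (hDf (z + t)).comp z ((hasDerivAt_id z).add_const t)
    have h3 : HasDerivAt (fun z' => f (t - z')) (-f1 (t - z)) z := by
      simpa [Function.comp_def] using (hDf (t - z)).comp z ((hasDerivAt_id z).const_sub t)
    have h4 : HasDerivAt (fun z' => G (t - z')) (-V (t - z)) z := by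
      simpa [Function.comp_def] using (hDG (t - z)).comp z ((hasDerivAt_id z).const_sub t)
    have := (((h1.add h2).add h3).div_const 2).sub h4
    refine this.congr_deriv ?_
    ring
  have eR : deriv (fun z => deriv (fun z' =>
      (f (z' - t) + f (z' + t) + f (t - z')) / 2 - G (t - z')) z) x
      = (f2 (x - t) + f2 (x + t) + f2 (t - x)) / 2 - (κ * f1 (t - x) - κ * V (t - x)) := by
    have hfun : (fun z => deriv (fun z' =>
        (f (z' - t) + f (z' + t) + f (t - z')) / 2 - G (t - z')) z)
        = fun z => (f1 (z - t) + f1 (z + t) - f1 (t - z)) / 2 + V (t - z) :=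
      funext fun z => (hinnerR z).deriv
    rw [hfun]
    have h1 : HasDerivAt (fun z => f1 (z - t)) (f2 (x - t)) x := by
      simpa [Function.comp_def] using (hDf1 (x - t)).comp x ((hasDerivAt_id x).sub_const t)
    have h2 : HasDerivAt (fun z => f1 (z + t)) (f2 (x + t)) x := by
      simpa [Function.comp_def] using (hDf1 (x + t)).comp x ((hasDerivAt_id x).add_const t)
    have h3 : HasDerivAt (fun z => f1 (t - z)) (-f2 (t - x)) x := by
      simpa [Function.comp_def] using (hDf1 (t - x)).comp x ((hasDerivAt_id x).const_sub t)
    have h4 : HasDerivAt (fun z => V (t - z)) (-(κ * f1 (t - x) - κ * V (t - x))) x := by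
      simpa [Function.comp_def] using (hDV (t - x)).comp x ((hasDerivAt_id x).const_sub t)
    have hsum := (((h1.add h2).sub h3).div_const 2).add h4
    rw [HasDerivAt.deriv (f := fun z => (f1 (z - t) + f1 (z + t) - f1 (t - z)) / 2 + V (t - z)) hsum]
    ring
  rw [eL, eR]
end

section
/- For κ > 0, t > 0, x ≥ 0, y ≥ 0, the Robin correction term of the heat kernel satisfies -2κ (4πt)^{-1/2} e^{κx} ∫_x^∞ e^{-κs} exp(-(s+y)²/(4t)) ds = -κ e^{κ(x+y)} e^{κ²t} erfc((x+y)/√(4t) + κ√t). -/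
open MeasureTheory Real

/-- The complementary error function. -/
noncomputable def erfc (z : ℝ) : ℝ :=
  (2 / Real.sqrt Real.pi) * ∫ u in Set.Ioi z, Real.exp (-u ^ 2)

lemma integral_Ioi_add_right (g : ℝ → ℝ) (a d : ℝ) :
    ∫ s in Set.Ioi a, g (s + d) = ∫ s in Set.Ioi (a + d), g s := by
  rw [← integral_indicator measurableSet_Ioi, ← integral_indicator measurableSet_Ioi,
    ← integral_add_right_eq_self ((Set.Ioi (a + d)).indicator g) d]
  congr 1
  ext s
  rw [Set.indicator_apply, Set.indicator_apply]
  simp [Set.mem_Ioi]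

/-- The Robin correction term of the heat kernel:
`-2κ (4πt)^{-1/2} e^{κx} ∫_x^∞ e^{-κs} e^{-(s+y)²/(4t)} ds
  = -κ e^{κ(x+y)} e^{κ²t} erfc((x+y)/√(4t) + κ√t)`. -/
theorem robin_heat_correction (κ t x y : ℝ) (hκ : 0 < κ) (ht : 0 < t)
    (hx : 0 ≤ x) (hy : 0 ≤ y) :
    -(2 * κ) * (Real.sqrt (4 * Real.pi * t))⁻¹ * Real.exp (κ * x) *
        ∫ s in Set.Ioi x, Real.exp (-κ * s) * Real.exp (-(s + y) ^ 2 / (4 * t))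
      = -κ * Real.exp (κ * (x + y)) * Real.exp (κ ^ 2 * t) *
          erfc ((x + y) / Real.sqrt (4 * t) + κ * Real.sqrt t) := by
  have hst : 0 < Real.sqrt t := Real.sqrt_pos.2 ht
  have hsq : Real.sqrt t * Real.sqrt t = t := Real.mul_self_sqrt ht.le
  have hb : (0 : ℝ) < (2 * Real.sqrt t)⁻¹ := by positivity
  -- pointwise completion of the square
  have hpt : ∀ s : ℝ, Real.exp (-κ * s) * Real.exp (-(s + y) ^ 2 / (4 * t))
      = Real.exp (κ * y + κ ^ 2 * t) *
        Real.exp (-((2 * Real.sqrt t)⁻¹ * (s + (y + 2 * κ * t))) ^ 2) := by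
    intro s
    rw [← Real.exp_add, ← Real.exp_add]
    congr 1
    have h4t : (4 : ℝ) * t ≠ 0 := by positivity
    field_simp
    nlinarith [hsq, sq_nonneg (s + y)]
  simp_rw [hpt]
  rw [integral_const_mul]
  have hsub : (∫ s in Set.Ioi x,
      Real.exp (-((2 * Real.sqrt t)⁻¹ * (s + (y + 2 * κ * t))) ^ 2))
      = (2 * Real.sqrt t) *
        ∫ u in Set.Ioi ((x + y) / Real.sqrt (4 * t) + κ * Real.sqrt t),
          Real.exp (-u ^ 2) := by
    rw [integral_Ioi_add_right (fun s => Real.exp (-((2 * Real.sqrt t)⁻¹ * s) ^ 2)) x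
      (y + 2 * κ * t)]
    rw [integral_comp_mul_left_Ioi (fun u => Real.exp (-u ^ 2)) _ hb]
    have h1 : (2 * Real.sqrt t)⁻¹ * (x + (y + 2 * κ * t))
        = (x + y) / Real.sqrt (4 * t) + κ * Real.sqrt t := by
      rw [show (4 : ℝ) * t = (2 * Real.sqrt t) ^ 2 by nlinarith [hsq],
        Real.sqrt_sq (by positivity)]
      field_simp
      nlinarith [hsq]
    rw [h1, smul_eq_mul, inv_inv]
  rw [hsub, erfc]
  have hπ : 0 < Real.sqrt Real.pi := Real.sqrt_pos.2 Real.pi_pos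
  have hs4 : Real.sqrt (4 * Real.pi * t)
      = 2 * Real.sqrt Real.pi * Real.sqrt t := by
    rw [show (4 : ℝ) * Real.pi * t = (2 * Real.sqrt Real.pi * Real.sqrt t) ^ 2 by
      nlinarith [hsq, Real.sq_sqrt Real.pi_pos.le],
      Real.sqrt_sq (by positivity)]
  rw [hs4, show κ * (x + y) = κ * x + κ * y by ring, Real.exp_add]
  field_simp
  rw [show κ * (x + y) = κ * x + κ * y by ring, Real.exp_add]
  ring
end

section
/- For κ > 0 and t > 0, ∫_0^∞ [-κ e^{2κx} e^{κ²t} erfc(2x/√(4t) + κ√t)] dx = ½(e^{κ²t} erfc(κ√t) - 1). -/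
open MeasureTheory Real

open Set Filter


lemma gauss_integrable : Integrable (fun u : ℝ => Real.exp (-u ^ 2)) := by
  have := integrable_exp_neg_mul_sq (b := 1) one_pos
  simpa using this

lemma Ioi_gauss_eq (z : ℝ) :
    (∫ u in Set.Ioi z, Real.exp (-u ^ 2)) =
      ((∫ u : ℝ, Real.exp (-u ^ 2)) - ∫ u in Set.Iic (0:ℝ), Real.exp (-u ^ 2))
        - ∫ u in (0:ℝ)..z, Real.exp (-u ^ 2) := by
  have h := gauss_integrable
  rw [← intervalIntegral.integral_Iic_sub_Iic h.integrableOn h.integrableOn]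
  have := intervalIntegral.integral_Iic_add_Ioi (b := z) (f := fun u : ℝ => Real.exp (-u ^ 2))
    h.integrableOn h.integrableOn
  linarith [this]

lemma hasDerivAt_Ioi_gauss (z : ℝ) :
    HasDerivAt (fun z => ∫ u in Set.Ioi z, Real.exp (-u ^ 2)) (-Real.exp (-z ^ 2)) z := by
  have hc : Continuous fun u : ℝ => Real.exp (-u ^ 2) := by continuity
  have h : HasDerivAt (fun z => ∫ u in (0:ℝ)..z, Real.exp (-u ^ 2))
      (Real.exp (-z ^ 2)) z :=
    intervalIntegral.integral_hasDerivAt_right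
      (gauss_integrable.intervalIntegrable)
      (hc.stronglyMeasurableAtFilter _ _) hc.continuousAt
  have h2 := (h.const_sub ((∫ u : ℝ, Real.exp (-u ^ 2)) - ∫ u in Set.Iic (0:ℝ), Real.exp (-u ^ 2)))
  exact h2.congr_of_eventuallyEq (by filter_upwards with w using (Ioi_gauss_eq w))

lemma hasDerivAt_erfc (z : ℝ) :
    HasDerivAt erfc (-(2 / Real.sqrt Real.pi) * Real.exp (-z ^ 2)) z := by
  have := (hasDerivAt_Ioi_gauss z).const_mul (2 / Real.sqrt Real.pi)
  refine this.congr_deriv (Eq.symm ?_)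
  ring

lemma erfc_nonneg (z : ℝ) : 0 ≤ erfc z := by
  apply mul_nonneg (by positivity)
  exact setIntegral_nonneg measurableSet_Ioi (fun u _ => (Real.exp_pos _).le)

lemma gauss_tail_le {z : ℝ} (hz : 0 < z) :
    (∫ u in Set.Ioi z, Real.exp (-u ^ 2)) ≤ Real.exp (-z ^ 2) / z := by
  have h1 : (∫ u in Set.Ioi z, Real.exp (-u ^ 2)) ≤ ∫ u in Set.Ioi z, Real.exp (-z * u) := by
    apply setIntegral_mono_on gauss_integrable.integrableOn
      (exp_neg_integrableOn_Ioi z hz) measurableSet_Ioi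
    intro u hu
    apply Real.exp_le_exp.2
    have : z * u ≤ u ^ 2 := by nlinarith [hu.out]
    linarith
  have h2 : (∫ u in Set.Ioi z, Real.exp (-z * u)) = Real.exp (-z ^ 2) / z := by
    have hderiv : ∀ u ∈ Set.Ici z, HasDerivAt (fun u => -Real.exp (-z * u) / z)
        (Real.exp (-z * u)) u := by
      intro u _
      have : HasDerivAt (fun u : ℝ => -z * u) (-z) u := by
        simpa using (hasDerivAt_id u).const_mul (-z)
      have h3 := ((this.exp).neg).div_const z
      refine h3.congr_deriv (Eq.symm ?_)
      field_simp
    have htend : Tendsto (fun u => -Real.exp (-z * u) / z) atTop (nhds 0) := by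
      have : Tendsto (fun u : ℝ => -z * u) atTop atBot :=
        (tendsto_const_mul_atBot_of_neg (by linarith)).2 tendsto_id
      have := (Real.tendsto_exp_atBot.comp this)
      simpa using ((this.neg).div_const z)
    rw [integral_Ioi_of_hasDerivAt_of_tendsto' hderiv (exp_neg_integrableOn_Ioi z hz) htend]
    rw [zero_sub]
    field_simp [pow_two]
  exact h1.trans_eq h2


/-- The trace of the Robin correction to the heat kernel:
`∫_0^∞ [-κ e^{2κx} e^{κ²t} erfc(2x/√(4t) + κ√t)] dx = ½(e^{κ²t} erfc(κ√t) - 1)`. -/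
theorem robin_heat_trace (κ t : ℝ) (hκ : 0 < κ) (ht : 0 < t) :
    ∫ x in Set.Ioi (0:ℝ),
        (-κ * Real.exp (2 * κ * x) * Real.exp (κ ^ 2 * t) *
          erfc (2 * x / Real.sqrt (4 * t) + κ * Real.sqrt t))
      = (Real.exp (κ ^ 2 * t) * erfc (κ * Real.sqrt t) - 1) / 2 := by
  set s := Real.sqrt t with hs
  have hs0 : 0 < s := Real.sqrt_pos.2 ht
  have hs2 : s ^ 2 = t := Real.sq_sqrt ht.le
  have hπ : (0:ℝ) < Real.sqrt Real.pi := Real.sqrt_pos.2 Real.pi_pos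
  have h4 : Real.sqrt (4 * t) = 2 * s := by
    rw [show (4:ℝ) * t = 2 ^ 2 * t by norm_num, Real.sqrt_mul (by positivity),
      Real.sqrt_sq (by norm_num : (0:ℝ) ≤ 2), hs]
  have hrw : ∀ x : ℝ, 2 * x / Real.sqrt (4 * t) = x / s := by
    intro x; rw [h4, mul_div_mul_left x s two_ne_zero]
  simp only [hrw]
  -- key exponential identity
  have key : ∀ x : ℝ, Real.exp (2 * κ * x) * Real.exp (-(x / s + κ * s) ^ 2)
      = Real.exp (-(x ^ 2 / t)) * Real.exp (-(κ ^ 2 * t)) := by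
    intro x
    rw [← Real.exp_add, ← Real.exp_add]
    congr 1
    rw [← hs2]
    field_simp
    ring
  have hEk : Real.exp (κ ^ 2 * t) * Real.exp (-(κ ^ 2 * t)) = 1 := by
    rw [← Real.exp_add]; simp
  have hfeq : (fun u : ℝ => Real.exp (-(u ^ 2 / t))) = fun u => Real.exp (-(1 / t) * u ^ 2) := by
    funext u; congr 1; ring
  have hgint : IntegrableOn (fun u : ℝ => Real.exp (-(u ^ 2 / t))) (Set.Ioi 0) := by
    rw [hfeq]
    exact (integrable_exp_neg_mul_sq (by positivity)).integrableOn
  have hgcont : Continuous (fun u : ℝ => Real.exp (-(u ^ 2 / t))) := by fun_prop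
  -- derivative of F
  have hderiv : ∀ x ∈ Set.Ici (0:ℝ), HasDerivAt
      (fun x => -(1/2) * Real.exp (κ ^ 2 * t) * (Real.exp (2 * κ * x) * erfc (x / s + κ * s))
        - (Real.sqrt Real.pi * s)⁻¹ * ∫ u in (0:ℝ)..x, Real.exp (-(u ^ 2 / t)))
      (-κ * Real.exp (2 * κ * x) * Real.exp (κ ^ 2 * t) * erfc (x / s + κ * s)) x := by
    intro x _
    have hz : HasDerivAt (fun x : ℝ => x / s + κ * s) (1 / s) x := by
      simpa using ((hasDerivAt_id x).div_const s).add_const (κ * s)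
    have hcomp := (hasDerivAt_erfc (x / s + κ * s)).comp x hz
    have hE : HasDerivAt (fun x : ℝ => Real.exp (2 * κ * x)) (2 * κ * Real.exp (2 * κ * x)) x := by
      have h := ((hasDerivAt_id x).const_mul (2 * κ)).exp
      simpa [mul_comm] using h
    have hprod := hE.mul hcomp
    have hG : HasDerivAt (fun x : ℝ => ∫ u in (0:ℝ)..x, Real.exp (-(u ^ 2 / t)))
        (Real.exp (-(x ^ 2 / t))) x :=
      intervalIntegral.integral_hasDerivAt_right (hgcont.intervalIntegrable _ _)
        (hgcont.stronglyMeasurableAtFilter _ _) hgcont.continuousAt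
    have H := (hprod.const_mul (-(1/2) * Real.exp (κ ^ 2 * t))).sub
      (hG.const_mul ((Real.sqrt Real.pi * s)⁻¹))
    refine H.congr_deriv (Eq.symm ?_)
    simp only [Function.comp_apply]
    linear_combination (-(Real.exp (κ ^ 2 * t) / (Real.sqrt Real.pi * s))) * key x
      + (-(Real.exp (-(x ^ 2 / t)) / (Real.sqrt Real.pi * s))) * hEk
  -- pointwise bound
  have hbound : ∀ x : ℝ, 0 ≤ x → Real.exp (2 * κ * x) * erfc (x / s + κ * s)
      ≤ 2 / Real.sqrt Real.pi / (κ * s) * Real.exp (-(κ ^ 2 * t)) * Real.exp (-(x ^ 2 / t)) := by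
    intro x hx
    have hz0 : 0 < x / s + κ * s := by positivity
    have h2 := gauss_tail_le hz0
    have h3 : Real.exp (-(x / s + κ * s) ^ 2) / (x / s + κ * s)
        ≤ Real.exp (-(x / s + κ * s) ^ 2) / (κ * s) := by
      have hxs : 0 ≤ x / s := by positivity
      have hks : (0:ℝ) < κ * s := by positivity
      gcongr (Real.exp (-(x / s + κ * s) ^ 2)) / ?_
      linarith
    have h1 : erfc (x / s + κ * s) ≤ (2 / Real.sqrt Real.pi)
        * (Real.exp (-(x / s + κ * s) ^ 2) / (κ * s)) :=
      mul_le_mul_of_nonneg_left (h2.trans h3) (by positivity)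
    calc Real.exp (2 * κ * x) * erfc (x / s + κ * s)
        ≤ Real.exp (2 * κ * x) * ((2 / Real.sqrt Real.pi)
            * (Real.exp (-(x / s + κ * s) ^ 2) / (κ * s))) :=
          mul_le_mul_of_nonneg_left h1 (Real.exp_pos _).le
      _ = 2 / Real.sqrt Real.pi / (κ * s)
            * (Real.exp (2 * κ * x) * Real.exp (-(x / s + κ * s) ^ 2)) := by ring
      _ = 2 / Real.sqrt Real.pi / (κ * s)
            * (Real.exp (-(x ^ 2 / t)) * Real.exp (-(κ ^ 2 * t))) := by rw [key x]
      _ = 2 / Real.sqrt Real.pi / (κ * s) * Real.exp (-(κ ^ 2 * t)) * Real.exp (-(x ^ 2 / t)) := by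
          ring
  -- tendsto of the gaussian tail term
  have hgt : Tendsto (fun x : ℝ => Real.exp (-(x ^ 2 / t))) atTop (nhds 0) := by
    have h1 : Tendsto (fun x : ℝ => x ^ 2 / t) atTop atTop :=
      (tendsto_pow_atTop two_ne_zero).atTop_div_const ht
    exact Real.tendsto_exp_atBot.comp (tendsto_neg_atTop_atBot.comp h1)
  have hT1 : Tendsto (fun x : ℝ => Real.exp (2 * κ * x) * erfc (x / s + κ * s)) atTop (nhds 0) := by
    apply squeeze_zero' (Filter.Eventually.of_forall fun x =>
      mul_nonneg (Real.exp_pos _).le (erfc_nonneg _))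
    · filter_upwards [eventually_ge_atTop (0:ℝ)] with x hx using hbound x hx
    · simpa using hgt.const_mul (2 / Real.sqrt Real.pi / (κ * s) * Real.exp (-(κ ^ 2 * t)))
  have hT2 : Tendsto (fun x : ℝ => ∫ u in (0:ℝ)..x, Real.exp (-(u ^ 2 / t))) atTop
      (nhds (Real.sqrt (Real.pi * t) / 2)) := by
    have h := intervalIntegral_tendsto_integral_Ioi 0 hgint tendsto_id
    have hval2 : (∫ u in Set.Ioi (0:ℝ), Real.exp (-(u ^ 2 / t))) = Real.sqrt (Real.pi * t) / 2 := by
      rw [hfeq, integral_gaussian_Ioi]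
      congr 2
      field_simp
    rwa [hval2] at h
  have hFtend : Tendsto
      (fun x => -(1/2) * Real.exp (κ ^ 2 * t) * (Real.exp (2 * κ * x) * erfc (x / s + κ * s))
        - (Real.sqrt Real.pi * s)⁻¹ * ∫ u in (0:ℝ)..x, Real.exp (-(u ^ 2 / t)))
      atTop (nhds (-(1/2))) := by
    have h := (hT1.const_mul (-(1/2) * Real.exp (κ ^ 2 * t))).sub
      (hT2.const_mul ((Real.sqrt Real.pi * s)⁻¹))
    have hval : -(1/2) * Real.exp (κ ^ 2 * t) * 0
        - (Real.sqrt Real.pi * s)⁻¹ * (Real.sqrt (Real.pi * t) / 2) = -(1/2) := by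
      rw [Real.sqrt_mul Real.pi_pos.le, ← hs]
      field_simp
      ring
    rwa [hval] at h
  -- integrability of the integrand
  have hcont_erfc : Continuous erfc :=
    continuous_iff_continuousAt.2 fun z => (hasDerivAt_erfc z).continuousAt
  have hcontf : Continuous (fun x : ℝ =>
      -κ * Real.exp (2 * κ * x) * Real.exp (κ ^ 2 * t) * erfc (x / s + κ * s)) := by
    exact ((continuous_const.mul (Real.continuous_exp.comp
      (continuous_const.mul continuous_id))).mul continuous_const).mul
      (hcont_erfc.comp ((continuous_id.div_const s).add continuous_const))
  have hf'int : IntegrableOn (fun x : ℝ =>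
      -κ * Real.exp (2 * κ * x) * Real.exp (κ ^ 2 * t) * erfc (x / s + κ * s)) (Set.Ioi 0) := by
    apply Integrable.mono'
      (hgint.const_mul (κ * Real.exp (κ ^ 2 * t)
        * (2 / Real.sqrt Real.pi / (κ * s) * Real.exp (-(κ ^ 2 * t)))))
    · exact hcontf.aestronglyMeasurable
    · filter_upwards [ae_restrict_mem measurableSet_Ioi] with x hx
      have hb := hbound x (le_of_lt hx)
      have habs : ‖-κ * Real.exp (2 * κ * x) * Real.exp (κ ^ 2 * t) * erfc (x / s + κ * s)‖
          = κ * Real.exp (κ ^ 2 * t) * (Real.exp (2 * κ * x) * erfc (x / s + κ * s)) := by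
        rw [Real.norm_eq_abs, abs_of_nonpos (by
          have h0 := erfc_nonneg (x / s + κ * s)
          have h1 : 0 < κ * Real.exp (2 * κ * x) * Real.exp (κ ^ 2 * t) := by positivity
          nlinarith)]
        ring
      rw [habs]
      calc κ * Real.exp (κ ^ 2 * t) * (Real.exp (2 * κ * x) * erfc (x / s + κ * s))
          ≤ κ * Real.exp (κ ^ 2 * t) * (2 / Real.sqrt Real.pi / (κ * s)
              * Real.exp (-(κ ^ 2 * t)) * Real.exp (-(x ^ 2 / t))) :=
            mul_le_mul_of_nonneg_left hb (by positivity)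
        _ = κ * Real.exp (κ ^ 2 * t) * (2 / Real.sqrt Real.pi / (κ * s)
              * Real.exp (-(κ ^ 2 * t))) * Real.exp (-(x ^ 2 / t)) := by ring
  have hmain :
      (∫ x in Set.Ioi (0:ℝ),
        (-κ * Real.exp (2 * κ * x) * Real.exp (κ ^ 2 * t) * erfc (x / s + κ * s)))
      = -(1/2) - (-(1/2) * Real.exp (κ ^ 2 * t) * (Real.exp (2 * κ * 0) * erfc (0 / s + κ * s))
          - (Real.sqrt Real.pi * s)⁻¹ * ∫ u in (0:ℝ)..(0:ℝ), Real.exp (-(u ^ 2 / t))) :=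
    integral_Ioi_of_hasDerivAt_of_tendsto' hderiv hf'int hFtend
  rw [hmain]
  simp only [mul_zero, Real.exp_zero, one_mul, zero_div, zero_add,
    intervalIntegral.integral_same]
  ring
end

section
/- For κ > 0, t > 0, x, y > 0, the identity -(2κ/π) t e^{κx} ∫_x^∞ e^{-κs}/((s+y)² + t²) ds = (2κ/π) e^{κ(x+y)} Im[e^{-iκt} Ei(iκt - κ(x+y))] holds, where Ei is the exponential integral. -/
open MeasureTheory Real Complex

/-- The exponential integral `Ei(z) = ∫_{-∞}^z e^u/u du`, for `z` with negative
real part represented as `Ei(z) = -∫_1^∞ e^{zs}/s ds`. -/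
noncomputable def Ei (z : ℂ) : ℂ :=
  -∫ s in Set.Ioi (1:ℝ), Complex.exp (z * s) / s

open Set Filter
set_option linter.unusedSectionVars false


lemma exp_integrableOn (z : ℂ) (hz : z.re < 0) (c : ℝ) :
    IntegrableOn (fun s : ℝ => Complex.exp (z * s)) (Ioi c) := by
  refine Integrable.mono' (g := fun s : ℝ => Real.exp (-(-z.re) * s))
    ((exp_neg_integrableOn_Ioi c (show (0:ℝ) < -z.re by linarith))) ?_ ?_
  · exact (Complex.continuous_exp.comp (continuous_const.mul Complex.continuous_ofReal)).aestronglyMeasurable.restrict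
  · filter_upwards with s
    rw [Complex.norm_exp]
    simp [Complex.mul_re]

lemma exp_integral_Ioi (z : ℂ) (hz : z.re < 0) (c : ℝ) :
    ∫ s in Ioi c, Complex.exp (z * s) = -Complex.exp (z * c) / z := by
  have hz0 : z ≠ 0 := by intro h; rw [h] at hz; simp at hz
  have hderiv : ∀ s : ℝ, HasDerivAt (fun s : ℝ => Complex.exp (z * s) / z)
      (Complex.exp (z * s)) s := by
    intro s
    have h1 : HasDerivAt (fun s : ℝ => z * (s : ℂ)) z s := by
      simpa using ((hasDerivAt_id s).ofReal_comp.const_mul z)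
    have := (h1.cexp).div_const z
    simpa [mul_comm, mul_div_assoc, mul_div_cancel_left₀ _ hz0] using this
  have htend : Tendsto (fun s : ℝ => Complex.exp (z * s) / z) atTop (nhds 0) := by
    rw [tendsto_zero_iff_norm_tendsto_zero]
    have h2 : (fun s : ℝ => ‖Complex.exp (z * s) / z‖) = fun s => Real.exp (z.re * s) / ‖z‖ := by
      funext s
      rw [norm_div, Complex.norm_exp]
      congr 2
      simp [Complex.mul_re]
    rw [h2]
    have : Tendsto (fun s : ℝ => Real.exp (z.re * s)) atTop (nhds 0) :=
      Real.tendsto_exp_atBot.comp (Tendsto.const_mul_atTop_of_neg hz tendsto_id)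
    simpa using this.div_const ‖z‖
  have := integral_Ioi_of_hasDerivAt_of_tendsto
    ((hderiv c).continuousAt.continuousWithinAt) (fun x _ => hderiv x)
    (exp_integrableOn z hz c) htend
  rw [this]; ring

section params
variable (κ t : ℝ)

noncomputable def hh (u : ℝ) : ℂ := (Real.exp (-(κ * u)) : ℂ) / ((u : ℂ) - t * Complex.I)

noncomputable def gg (a : ℝ) : ℂ :=
  Complex.exp (-(κ * t : ℝ) * Complex.I) *
    ∫ s in Ioi (1:ℝ), Complex.exp (((κ * t : ℝ) * Complex.I - (κ * a : ℝ)) * s) / s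

variable {κ t}
variable (hκ : 0 < κ) (ht : 0 < t)
include hκ ht

lemma den_ne (u : ℝ) : (u : ℂ) - t * Complex.I ≠ 0 := by
  intro h
  have := congrArg Complex.im h
  simp at this
  exact ht.ne' this

lemma hh_integrableOn (a : ℝ) : IntegrableOn (hh κ t) (Ioi a) := by
  refine Integrable.mono' (g := fun u : ℝ => t⁻¹ * Real.exp (-κ * u))
    (((exp_neg_integrableOn_Ioi a hκ)).const_mul _) ?_ ?_
  · apply Continuous.aestronglyMeasurable ?_ |>.restrict
    exact (Complex.continuous_ofReal.comp (Real.continuous_exp.comp (by fun_prop))).div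
      (by fun_prop) (den_ne hκ ht)
  · filter_upwards with u
    rw [hh, norm_div]
    have h1 : ‖((Real.exp (-(κ * u)) : ℝ) : ℂ)‖ = Real.exp (-(κ * u)) := by
      simp [Complex.norm_exp]
    have h2 : t ≤ ‖(u : ℂ) - t * Complex.I‖ := by
      have h3 := Complex.abs_im_le_norm ((u : ℂ) - t * Complex.I)
      have him : ((u : ℂ) - t * Complex.I).im = -t := by simp
      rw [him, abs_neg, abs_of_pos ht] at h3
      exact h3
    rw [h1]
    calc Real.exp (-(κ * u)) / ‖(u : ℂ) - t * Complex.I‖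
        ≤ Real.exp (-(κ * u)) / t :=
          div_le_div_of_nonneg_left (Real.exp_pos _).le ht h2
      _ = t⁻¹ * Real.exp (-κ * u) := by rw [div_eq_inv_mul]; ring_nf

lemma F_hasDeriv (s : ℝ) (hs : s ∈ Ioi (1:ℝ)) (b : ℝ) :
    HasDerivAt (fun b : ℝ => Complex.exp (((κ * t : ℝ) * Complex.I - (κ * b : ℝ)) * s) / s)
      ((-κ : ℂ) * Complex.exp (((κ * t : ℝ) * Complex.I - (κ * b : ℝ)) * s)) b := by
  have hs0 : (s : ℂ) ≠ 0 := by
    simp only [ne_eq, Complex.ofReal_eq_zero]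
    rintro rfl; simp at hs; linarith
  have heq : (fun b : ℝ => Complex.exp (((κ * t : ℝ) * Complex.I - (κ * b : ℝ)) * s) / s)
      = fun b : ℝ => Complex.exp ((κ * t : ℝ) * Complex.I * s - ((κ * b : ℝ) : ℂ) * s) / s := by
    funext b; ring_nf
  rw [heq]
  have h1 : HasDerivAt (fun b : ℝ => ((κ * b : ℝ) : ℂ)) (κ : ℂ) b := by
    have : HasDerivAt (fun b : ℝ => κ * b) κ b := by
      simpa using (hasDerivAt_id b).const_mul κ
    exact this.ofReal_comp
  have h2 := ((h1.mul_const (s : ℂ)).const_sub ((κ * t : ℝ) * Complex.I * s)).cexp.div_const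
    (s : ℂ)
  convert h2 using 1
  case e'_4 => rfl
  rw [eq_div_iff hs0]
  ring_nf

lemma gg_hasDerivAt (a : ℝ) (ha : 0 < a) :
    HasDerivAt (gg κ t) (-(hh κ t a)) a := by
  set z : ℝ → ℂ := fun b => (κ * t : ℝ) * Complex.I - (κ * b : ℝ) with hzdef
  have hzre : ∀ b : ℝ, (z b).re = -(κ * b) := by intro b; simp [hzdef]
  have hzre2 : ∀ b s : ℝ, (z b * (s:ℂ)).re = -(κ * b) * s := by
    intro b s; simp [hzdef, Complex.mul_re]
  have hmeas : ∀ b : ℝ, AEStronglyMeasurable (fun s : ℝ => Complex.exp (z b * s) / s)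
      (volume.restrict (Ioi (1:ℝ))) := by
    intro b
    apply ContinuousOn.aestronglyMeasurable ?_ measurableSet_Ioi
    apply ContinuousOn.div (Continuous.continuousOn (by fun_prop))
      (Complex.continuous_ofReal.continuousOn)
    intro s hs
    simp only [ne_eq, Complex.ofReal_eq_zero]
    intro h; rw [h] at hs; simp at hs; linarith
  have hF_int : Integrable (fun s : ℝ => Complex.exp (z a * s) / s)
      (volume.restrict (Ioi (1:ℝ))) := by
    refine Integrable.mono' (g := fun s : ℝ => Real.exp (-(κ * a) * s))
      ((exp_neg_integrableOn_Ioi 1 (by positivity))) (hmeas a) ?_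
    filter_upwards [ae_restrict_mem measurableSet_Ioi] with s hs
    rw [norm_div, Complex.norm_exp, hzre2]
    have h1 : (1:ℝ) ≤ ‖(s:ℂ)‖ := by
      rw [Complex.norm_real, Real.norm_eq_abs]
      rw [abs_of_pos (by linarith [mem_Ioi.mp hs])]
      linarith [mem_Ioi.mp hs]
    calc Real.exp (-(κ * a) * s) / ‖(s : ℂ)‖ ≤ Real.exp (-(κ * a) * s) / 1 :=
          div_le_div_of_nonneg_left (Real.exp_pos _).le one_pos h1
      _ = Real.exp (-(κ * a) * s) := by rw [div_one]
  have key := hasDerivAt_integral_of_dominated_loc_of_deriv_le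
    (μ := volume.restrict (Ioi (1:ℝ))) (x₀ := a)
    (F := fun b s => Complex.exp (z b * s) / s)
    (F' := fun b s => (-κ : ℂ) * Complex.exp (z b * s))
    (bound := fun s => κ * Real.exp (-(κ * (a/2)) * s))
    (s := Metric.ball a (a/2)) (Metric.ball_mem_nhds a (by positivity))
    (Eventually.of_forall hmeas) hF_int
    (Continuous.aestronglyMeasurable (by fun_prop)).restrict
    ?_ (((exp_neg_integrableOn_Ioi 1 (by positivity))).const_mul κ)
    ?_
  · obtain ⟨-, hd⟩ := key
    have hint : ∫ s in Ioi (1:ℝ), (-κ : ℂ) * Complex.exp (z a * s)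
        = (-κ : ℂ) * (-Complex.exp (z a * 1) / z a) := by
      rw [integral_const_mul, exp_integral_Ioi (z a) (by rw [hzre]; nlinarith) 1]
      norm_num
    rw [hint] at hd
    have hz0 : z a ≠ 0 := by
      intro h
      have := congrArg Complex.re h
      rw [hzre] at this
      simp only [Complex.zero_re] at this
      nlinarith
    have hd2 := hd.const_mul (Complex.exp (-(κ * t : ℝ) * Complex.I))
    have hexp : Complex.exp (-(κ * t : ℝ) * Complex.I) * Complex.exp (z a)
        = (Real.exp (-(κ * a)) : ℂ) := by
      rw [← Complex.exp_add, Complex.ofReal_exp]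
      congr 1
      rw [hzdef]
      push_cast
      ring
    have halg : Complex.exp (-(κ * t : ℝ) * Complex.I) * ((-κ : ℂ) * (-Complex.exp (z a * 1) / z a))
        = -(hh κ t a) := by
      have hza : z a = -(κ:ℂ) * ((a:ℂ) - t * Complex.I) := by rw [hzdef]; push_cast; ring
      have hκ0 : (κ : ℂ) ≠ 0 := by exact_mod_cast hκ.ne'
      rw [mul_one, hh]
      rw [show Complex.exp (-(κ * t : ℝ) * Complex.I) * ((-κ : ℂ) * (-Complex.exp (z a) / z a))
          = (κ : ℂ) * (Complex.exp (-(κ * t : ℝ) * Complex.I) * Complex.exp (z a)) / z a by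
        ring]
      rw [hexp, hza]
      rw [neg_mul, div_neg, mul_div_mul_left _ _ hκ0]
    rw [halg] at hd2
    exact hd2
  · filter_upwards [ae_restrict_mem measurableSet_Ioi] with s hs b hb
    rw [norm_mul, Complex.norm_exp, hzre2]
    have hnκ : ‖(-κ : ℂ)‖ = κ := by
      rw [norm_neg]
      simp [abs_of_pos hκ]
    rw [hnκ]
    have hb2 : a / 2 < b := by
      rw [Metric.mem_ball, Real.dist_eq, abs_lt] at hb
      linarith [hb.1]
    have hs1 : (1:ℝ) < s := mem_Ioi.mp hs
    have : -(κ * b) * s ≤ -(κ * (a/2)) * s := by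
      nlinarith [mul_nonneg (mul_nonneg hκ.le (by linarith : (0:ℝ) ≤ s))
        (by linarith : (0:ℝ) ≤ b - a/2)]
    exact mul_le_mul_of_nonneg_left (Real.exp_le_exp.mpr this) hκ.le
  · filter_upwards [ae_restrict_mem measurableSet_Ioi] with s hs b hb
    exact F_hasDeriv hκ ht s hs b
end params

section rest
variable {κ t : ℝ} (hκ : 0 < κ) (ht : 0 < t)
include hκ ht

lemma gg_tendsto : Tendsto (gg κ t) atTop (nhds 0) := by
  have C_int : IntegrableOn (fun s : ℝ => Real.exp (-κ * s)) (Ioi (1:ℝ)) :=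
    exp_neg_integrableOn_Ioi 1 hκ
  apply squeeze_zero_norm' (a := fun a : ℝ => Real.exp (-κ * (a - 1)) * ∫ s in Ioi (1:ℝ), Real.exp (-κ * s))
  · filter_upwards [eventually_ge_atTop (1:ℝ)] with a ha
    rw [gg, norm_mul]
    have h1 : ‖Complex.exp (-(κ * t : ℝ) * Complex.I)‖ = 1 := by
      rw [Complex.norm_exp]
      simp
    rw [h1, one_mul, ← integral_const_mul]
    apply norm_integral_le_of_norm_le (C_int.const_mul _)
    filter_upwards [ae_restrict_mem measurableSet_Ioi] with s hs
    have hs1 : (1:ℝ) < s := mem_Ioi.mp hs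
    rw [norm_div, Complex.norm_exp]
    have hre : (((κ * t : ℝ) * Complex.I - (κ * a : ℝ)) * s).re = -(κ * a) * s := by
      simp [Complex.mul_re]
    rw [hre]
    have hsn : (1:ℝ) ≤ ‖(s:ℂ)‖ := by
      rw [Complex.norm_real, Real.norm_eq_abs, abs_of_pos (by linarith)]; linarith
    calc Real.exp (-(κ * a) * s) / ‖(s:ℂ)‖ ≤ Real.exp (-(κ * a) * s) / 1 :=
          div_le_div_of_nonneg_left (Real.exp_pos _).le one_pos hsn
      _ = Real.exp (-(κ * a) * s) := div_one _
      _ ≤ Real.exp (-κ * (a - 1)) * Real.exp (-κ * s) := by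
          rw [← Real.exp_add, Real.exp_le_exp]
          nlinarith [mul_nonneg hκ.le (mul_nonneg (by linarith : (0:ℝ) ≤ a - 1)
            (by linarith : (0:ℝ) ≤ s - 1))]
  · have h0 : Tendsto (fun a : ℝ => Real.exp (-κ * (a - 1))) atTop (nhds 0) := by
      apply Real.tendsto_exp_atBot.comp
      apply Tendsto.const_mul_atTop_of_neg (by linarith : -κ < 0)
      exact tendsto_atTop_add_const_right atTop (-1) tendsto_id
    simpa using h0.mul_const (∫ s in Ioi (1:ℝ), Real.exp (-κ * s))

lemma key_eq (a : ℝ) (ha : 0 < a) : ∫ u in Ioi a, hh κ t u = gg κ t a := by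
  have h := integral_Ioi_of_hasDerivAt_of_tendsto
    (f := fun b => -(gg κ t b)) (f' := hh κ t) (a := a) (m := 0)
    (((gg_hasDerivAt hκ ht a ha).neg).continuousAt.continuousWithinAt)
    (fun x hx => by have := (gg_hasDerivAt hκ ht x (lt_trans ha (mem_Ioi.mp hx))).neg; rw [neg_neg] at this; exact this)
    (hh_integrableOn hκ ht a)
    (by simpa using (gg_tendsto hκ ht).neg)
  simpa using h
end rest

/-- The Robin correction to the cylinder (Poisson) kernel:
`-(2κ/π) t e^{κx} ∫_x^∞ e^{-κs}/((s+y)² + t²) ds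
  = (2κ/π) e^{κ(x+y)} Im[e^{-iκt} Ei(iκt - κ(x+y))]`. -/
theorem robin_cylinder_correction (κ t x y : ℝ)
    (hκ : 0 < κ) (ht : 0 < t) (hx : 0 < x) (hy : 0 < y) :
    -(2 * κ / Real.pi) * t * Real.exp (κ * x) *
        ∫ s in Set.Ioi x, Real.exp (-κ * s) / ((s + y) ^ 2 + t ^ 2)
      = (2 * κ / Real.pi) * Real.exp (κ * (x + y)) *
          (Complex.exp (-(κ * t : ℝ) * Complex.I) *
            Ei ((κ * t : ℝ) * Complex.I - (κ * (x + y) : ℝ))).im := by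
  have ha : 0 < x + y := by linarith
  -- Step A: substitution u = s + y
  have hsub : (∫ s in Set.Ioi x, Real.exp (-κ * s) / ((s + y) ^ 2 + t ^ 2))
      = ∫ u in Set.Ioi (x + y), Real.exp (-κ * (u - y)) / (u ^ 2 + t ^ 2) := by
    rw [← MeasurePreserving.setIntegral_preimage_emb (measurePreserving_add_right volume y)
      (MeasurableEquiv.addRight y).measurableEmbedding
      (fun u => Real.exp (-κ * (u - y)) / (u ^ 2 + t ^ 2)) (Set.Ioi (x + y))]
    have hpre : (fun s : ℝ => s + y) ⁻¹' Set.Ioi (x + y) = Set.Ioi x := by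
      ext s; simp
    rw [hpre]
    simp only [add_sub_cancel_right]
  rw [hsub]
  -- Step B: pull out exp(κ y)
  have hB : (∫ u in Set.Ioi (x + y), Real.exp (-κ * (u - y)) / (u ^ 2 + t ^ 2))
      = Real.exp (κ * y) * ∫ u in Set.Ioi (x + y), Real.exp (-(κ * u)) / (u ^ 2 + t ^ 2) := by
    rw [← integral_const_mul]
    congr 1
    funext u
    have h2 : Real.exp (-κ * (u - y)) = Real.exp (κ * y) * Real.exp (-(κ * u)) := by
      rw [← Real.exp_add]; ring_nf
    rw [h2, mul_div_assoc]
  rw [hB]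
  -- Step C: identify t * integral with imaginary part
  have hC : t * ∫ u in Set.Ioi (x + y), Real.exp (-(κ * u)) / (u ^ 2 + t ^ 2)
      = (gg κ t (x + y)).im := by
    rw [← key_eq hκ ht (x + y) ha]
    have him := integral_im (hh_integrableOn hκ ht (x + y))
    simp only [RCLike.im_eq_complex_im] at him
    rw [← him, ← integral_const_mul]
    apply setIntegral_congr_fun measurableSet_Ioi
    intro u _
    have hden : ((u:ℂ) - t * Complex.I) ≠ 0 := den_ne hκ ht u
    simp only [hh, Complex.div_im]
    simp only [Complex.ofReal_re, Complex.ofReal_im, Complex.sub_re, Complex.sub_im,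
      Complex.mul_re, Complex.mul_im, Complex.I_re, Complex.I_im, Complex.normSq_apply]
    ring_nf
  -- Step D: unfold Ei and conclude
  have hD : (Complex.exp (-(κ * t : ℝ) * Complex.I) *
        Ei ((κ * t : ℝ) * Complex.I - (κ * (x + y) : ℝ))).im = -(gg κ t (x + y)).im := by
    rw [Ei, gg]
    simp [mul_comm]
  rw [hD, ← hC, show κ * (x + y) = κ * x + κ * y by ring, Real.exp_add]
  ring
end

section
/- For every n ≥ 1 and every x ≥ 0, the generalized Laguerre polynomial satisfies |L¹_{n-1}(x)| e^{-x/2} ≤ n, where L¹_{n-1}(x) = Σ_{j=1}^n C(n,j) (-x)^{j-1}/(j-1)!. -/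
open Finset Polynomial

noncomputable def lagP (n : ℕ) : Polynomial ℝ :=
  ∑ k ∈ Finset.range n, Polynomial.C ((n.choose (k+1) : ℝ) * (-1)^k / (Nat.factorial k)) * Polynomial.X ^ k

lemma lagP_coeff (n k : ℕ) :
    (lagP n).coeff k = if k < n then (n.choose (k+1) : ℝ) * (-1)^k / (Nat.factorial k) else 0 := by
  simp [lagP, Polynomial.finset_sum_coeff, Polynomial.coeff_C_mul, Polynomial.coeff_X_pow,
    Finset.sum_ite_eq, Finset.mem_range]

lemma choose_key (n j : ℕ) (h : j + 1 ≤ n) :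
    (n.choose (j+1) : ℝ) * (j+1) = ((n:ℝ) - j) * (n.choose j) := by
  have := Nat.choose_succ_right_eq n j
  have hc : ((n.choose (j+1) * (j+1) : ℕ) : ℝ) = ((n.choose j * (n - j) : ℕ) : ℝ) := by
    rw [this]
  push_cast [Nat.cast_sub (by omega : j ≤ n)] at hc
  linarith [hc]

lemma lagP_ode (n : ℕ) (hn : 1 ≤ n) :
    Polynomial.X * Polynomial.derivative (Polynomial.derivative (lagP n))
      + (Polynomial.C 2 - Polynomial.X) * Polynomial.derivative (lagP n)
      + Polynomial.C ((n : ℝ) - 1) * lagP n = 0 := by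
  ext k
  simp only [Polynomial.coeff_add, Polynomial.coeff_zero, Polynomial.coeff_C_mul,
    sub_mul, Polynomial.coeff_sub]
  rcases k with _ | m
  · simp only [Polynomial.mul_coeff_zero, Polynomial.coeff_X_zero, zero_mul,
      Polynomial.coeff_derivative, lagP_coeff, Polynomial.coeff_ofNat_mul]
    rcases eq_or_lt_of_le hn with h | h
    · simp [← h]
    · have h1 : 1 < n := h
      have h0 : 0 < n := hn
      simp only [if_pos h1, if_pos h0]
      have key := choose_key n 1 (by omega)
      simp only [Nat.choose_one_right] at key
      have : (n.choose 2 : ℝ) = ((n:ℝ) - 1) * n / 2 := by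
        norm_num at key; linarith
      rw [this]
      norm_num [Nat.factorial]
      ring
  · simp only [Polynomial.coeff_X_mul, Polynomial.coeff_derivative, lagP_coeff,
      Polynomial.coeff_ofNat_mul]
    by_cases h2 : m + 2 < n
    · have h1 : m + 1 < n := by omega
      simp only [if_pos h1, if_pos h2]
      have key := choose_key n (m+2) (by omega)
      have hrw : (n.choose (m+3) : ℝ) = ((n:ℝ) - (m+2)) * (n.choose (m+2)) / (m+3) := by
        push_cast at key ⊢
        field_simp
        linarith [key]
      have hidx : m + 1 + 1 + 1 = m + 3 := by ring
      rw [hidx, hrw]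
      have hf1 : ((m+1).factorial : ℝ) ≠ 0 := by positivity
      have e2 : ((m+2).factorial : ℝ) = (m+2) * (m+1).factorial := by
        push_cast [Nat.factorial_succ]; ring
      push_cast [e2]
      field_simp
      ring
    · by_cases h1 : m + 1 < n
      · have : n = m + 2 := by omega
        subst this
        simp only [if_pos h1, if_neg h2]
        push_cast
        ring
      · simp [if_neg h1, if_neg h2]

noncomputable def lagQ (n : ℕ) : Polynomial ℝ := Polynomial.derivative (lagP n)

noncomputable def lagW (n : ℕ) : Polynomial ℝ :=
  lagP n + Polynomial.X * lagQ n - Polynomial.C (2⁻¹ : ℝ) * (Polynomial.X * lagP n)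

lemma lagW_deriv (n : ℕ) (hn : 1 ≤ n) :
    Polynomial.derivative (lagW n)
      = Polynomial.C (2⁻¹ : ℝ) * (Polynomial.X * lagQ n)
        - Polynomial.C ((n:ℝ) - 2⁻¹) * lagP n := by
  have h := lagP_ode n hn
  have e : (Polynomial.C (2⁻¹:ℝ)) * 2 = 1 := by
    rw [show ((2:Polynomial ℝ)) = Polynomial.C (2:ℝ) from (map_ofNat _ 2).symm,
      ← Polynomial.C_mul]
    norm_num
  simp only [map_sub, map_ofNat, map_one] at h
  simp only [lagW, lagQ, derivative_add, derivative_sub, derivative_mul, derivative_X,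
    derivative_C, Polynomial.derivative_C_mul, map_sub, map_ofNat]
  linear_combination h - (Polynomial.X * Polynomial.derivative (lagP n) + lagP n) * e

lemma lagW_eval (n : ℕ) (x : ℝ) :
    Polynomial.eval x (lagW n)
      = Polynomial.eval x (lagP n) + x * Polynomial.eval x (lagQ n)
        - 2⁻¹ * (x * Polynomial.eval x (lagP n)) := by
  simp [lagW]

lemma lagP_eval_zero (n : ℕ) (hn : 1 ≤ n) : Polynomial.eval 0 (lagP n) = n := by
  rw [← Polynomial.coeff_zero_eq_eval_zero, lagP_coeff]
  simp [Nat.lt_of_lt_of_le Nat.zero_lt_one hn, Nat.choose_one_right]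

lemma hasDeriv_exphalf (x : ℝ) :
    HasDerivAt (fun y : ℝ => Real.exp (-y/2)) (Real.exp (-x/2) * (-1/2)) x := by
  exact ((hasDerivAt_id x).neg.div_const 2).exp

lemma hasDeriv_v (n : ℕ) (x : ℝ) :
    HasDerivAt (fun y : ℝ => y * Real.exp (-y/2) * Polynomial.eval y (lagP n))
      (Real.exp (-x/2) * Polynomial.eval x (lagW n)) x := by
  have h := ((hasDerivAt_id x).mul (hasDeriv_exphalf x)).mul (Polynomial.hasDerivAt (lagP n) x)
  refine h.congr_deriv (Eq.symm ?_)
  rw [lagW_eval]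
  show _ = (1 * Real.exp (-x/2) + x * (Real.exp (-x/2) * (-1/2))) * _ + _
  simp only [lagQ, id, Pi.mul_apply]
  ring

lemma hasDeriv_vp (n : ℕ) (hn : 1 ≤ n) (x : ℝ) :
    HasDerivAt (fun y : ℝ => Real.exp (-y/2) * Polynomial.eval y (lagW n))
      ((x/4 - n) * Real.exp (-x/2) * Polynomial.eval x (lagP n)) x := by
  have h := (hasDeriv_exphalf x).mul (Polynomial.hasDerivAt (lagW n) x)
  refine h.congr_deriv (Eq.symm ?_)
  rw [lagW_deriv n hn]
  simp only [Polynomial.eval_sub, Polynomial.eval_mul, Polynomial.eval_C, Polynomial.eval_X,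
    lagW_eval]
  ring

noncomputable def lagG (n : ℕ) (y : ℝ) : ℝ :=
  Real.exp (-y) * (Polynomial.eval y (lagW n))^2
    + ((n:ℝ) - y/4) * y * Real.exp (-y) * (Polynomial.eval y (lagP n))^2

lemma hasDeriv_expneg (x : ℝ) :
    HasDerivAt (fun y : ℝ => Real.exp (-y)) (-Real.exp (-x)) x := by
  simpa using ((hasDerivAt_id x).neg).exp

lemma hasDeriv_G (n : ℕ) (hn : 1 ≤ n) (x : ℝ) :
    HasDerivAt (lagG n) (-(n:ℝ) * Real.exp (-x) * (Polynomial.eval x (lagP n))^2) x := by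
  have hW := Polynomial.hasDerivAt (lagW n) x
  have hP := Polynomial.hasDerivAt (lagP n) x
  have t1 := (hasDeriv_expneg x).mul (hW.pow 2)
  have hc : HasDerivAt (fun y : ℝ => ((n:ℝ) - y/4) * y)
      ((0 - 1/4) * x + ((n:ℝ) - x/4) * 1) x :=
    ((hasDerivAt_const x (n:ℝ)).sub ((hasDerivAt_id x).div_const 4)).mul (hasDerivAt_id x)
  have t2 := (hc.mul (hasDeriv_expneg x)).mul (hP.pow 2)
  have h := t1.add t2
  refine h.congr_deriv (Eq.symm ?_)
  have hdW : Polynomial.eval x (Polynomial.derivative (lagW n))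
      = 2⁻¹ * (x * Polynomial.eval x (lagQ n)) - ((n:ℝ) - 2⁻¹) * Polynomial.eval x (lagP n) := by
    rw [lagW_deriv n hn]; simp
  have hdP : Polynomial.eval x (Polynomial.derivative (lagP n)) = Polynomial.eval x (lagQ n) := rfl
  simp only [hdW, hdP, lagW_eval, id, Pi.mul_apply, Pi.pow_apply]
  ring

lemma lagG_le (n : ℕ) (hn : 1 ≤ n) {x : ℝ} (hx : 0 ≤ x) : lagG n x ≤ (n:ℝ)^2 := by
  have h0 : lagG n 0 = (n:ℝ)^2 := by
    simp [lagG, lagW_eval, lagP_eval_zero n hn]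
  have hanti : AntitoneOn (lagG n) (Set.Ici 0) := by
    apply antitoneOn_of_deriv_nonpos (convex_Ici 0)
    · exact fun y _ => ((hasDeriv_G n hn y).differentiableAt).continuousAt.continuousWithinAt
    · exact fun y _ => ((hasDeriv_G n hn y).differentiableAt).differentiableWithinAt
    · intro y _
      rw [(hasDeriv_G n hn y).deriv]
      have : 0 ≤ (n:ℝ) * Real.exp (-y) * (Polynomial.eval y (lagP n))^2 := by positivity
      linarith
  calc lagG n x ≤ lagG n 0 := hanti (Set.mem_Ici.2 le_rfl) (Set.mem_Ici.2 hx) hx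
    _ = (n:ℝ)^2 := h0

lemma vp_bound (n : ℕ) (hn : 1 ≤ n) {x : ℝ} (hx : 0 ≤ x) (hx4 : x ≤ 4*n) :
    |Real.exp (-x/2) * Polynomial.eval x (lagW n)| ≤ n := by
  have hG := lagG_le n hn hx
  have h2 : 0 ≤ ((n:ℝ) - x/4) * x * Real.exp (-x) * (Polynomial.eval x (lagP n))^2 := by
    have : 0 ≤ (n:ℝ) - x/4 := by linarith
    positivity
  have hsq : (Real.exp (-x/2) * Polynomial.eval x (lagW n))^2
      = Real.exp (-x) * (Polynomial.eval x (lagW n))^2 := by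
    rw [mul_pow, sq (Real.exp (-x/2)), ← Real.exp_add]
    norm_num
  have h3 : (Real.exp (-x/2) * Polynomial.eval x (lagW n))^2 ≤ ((n:ℝ))^2 := by
    rw [hsq]; simp only [lagG] at hG; linarith
  have := abs_nonneg (Real.exp (-x/2) * Polynomial.eval x (lagW n))
  nlinarith [sq_abs (Real.exp (-x/2) * Polynomial.eval x (lagW n)), Nat.cast_nonneg (α := ℝ) n]

lemma v_bound (n : ℕ) (hn : 1 ≤ n) {x : ℝ} (hx : 0 ≤ x) (hx4 : x ≤ 4*n) :
    |x * Real.exp (-x/2) * Polynomial.eval x (lagP n)| ≤ n * x := by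
  have key := norm_image_sub_le_of_norm_deriv_le_segment'
    (f := fun y : ℝ => y * Real.exp (-y/2) * Polynomial.eval y (lagP n))
    (f' := fun y : ℝ => Real.exp (-y/2) * Polynomial.eval y (lagW n))
    (a := 0) (b := 4*n) (C := n)
    (fun y hy => (hasDeriv_v n y).hasDerivWithinAt)
    (fun y hy => by
      rw [Real.norm_eq_abs]
      exact vp_bound n hn hy.1 (le_of_lt hy.2))
    x ⟨hx, hx4⟩
  calc |x * Real.exp (-x/2) * Polynomial.eval x (lagP n)| = ‖x * Real.exp (-x/2) * Polynomial.eval x (lagP n) - 0 * Real.exp (-(0:ℝ)/2) * Polynomial.eval 0 (lagP n)‖ := by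
        rw [Real.norm_eq_abs]; ring_nf
    _ ≤ (n:ℝ) * (x - 0) := key
    _ = n * x := by ring

noncomputable def fv (n : ℕ) (y : ℝ) : ℝ := (y * Real.exp (-y/2) * Polynomial.eval y (lagP n))^2

noncomputable def gv (n : ℕ) (y : ℝ) : ℝ :=
  2 * ((y * Real.exp (-y/2) * Polynomial.eval y (lagP n)) * (Real.exp (-y/2) * Polynomial.eval y (lagW n)))

lemma hasDeriv_f (n : ℕ) (x : ℝ) : HasDerivAt (fv n) (gv n x) x := by
  have := (hasDeriv_v n x).pow 2
  refine this.congr_deriv (Eq.symm ?_)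
  simp [gv]; ring

lemma hasDeriv_g (n : ℕ) (hn : 1 ≤ n) (x : ℝ) :
    HasDerivAt (gv n)
      (2 * ((Real.exp (-x/2) * Polynomial.eval x (lagW n))^2
        + (x * Real.exp (-x/2) * Polynomial.eval x (lagP n))
          * ((x/4 - n) * Real.exp (-x/2) * Polynomial.eval x (lagP n)))) x := by
  have := ((hasDeriv_v n x).mul (hasDeriv_vp n hn x)).const_mul 2
  refine this.congr_deriv (Eq.symm ?_)
  ring

lemma g_mono (n : ℕ) (hn : 1 ≤ n) : MonotoneOn (gv n) (Set.Ici (4*(n:ℝ))) := by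
  apply monotoneOn_of_deriv_nonneg (convex_Ici _)
  · exact fun y _ => ((hasDeriv_g n hn y).differentiableAt).continuousAt.continuousWithinAt
  · exact fun y _ => ((hasDeriv_g n hn y).differentiableAt).differentiableWithinAt
  · intro y hy
    rw [interior_Ici] at hy
    have hy' : 4*(n:ℝ) < y := hy
    have hn1 : (1:ℝ) ≤ n := by exact_mod_cast hn
    rw [(hasDeriv_g n hn y).deriv]
    have h1 : 0 ≤ (Real.exp (-y/2) * Polynomial.eval y (lagW n))^2 := sq_nonneg _
    have h2 : (y * Real.exp (-y/2) * Polynomial.eval y (lagP n))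
          * ((y/4 - n) * Real.exp (-y/2) * Polynomial.eval y (lagP n))
        = y * (y/4 - n) * (Real.exp (-y/2) * Polynomial.eval y (lagP n))^2 := by ring
    have h3 : 0 ≤ y * (y/4 - n) * (Real.exp (-y/2) * Polynomial.eval y (lagP n))^2 := by
      have : 0 ≤ y/4 - n := by linarith
      have : 0 ≤ y * (y/4 - (n:ℝ)) := by nlinarith
      positivity
    rw [h2]; linarith

lemma f_tendsto (n : ℕ) : Filter.Tendsto (fv n) Filter.atTop (nhds 0) := by
  have h := Polynomial.tendsto_div_exp_atTop ((Polynomial.X * lagP n)^2)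
  apply h.congr
  intro y
  simp only [fv, Polynomial.eval_pow, Polynomial.eval_mul, Polynomial.eval_X]
  rw [div_eq_mul_inv, ← Real.exp_neg]
  rw [show Real.exp (-y) = Real.exp (-y/2) * Real.exp (-y/2) by rw [← Real.exp_add]; ring_nf]
  ring

lemma g_nonpos (n : ℕ) (hn : 1 ≤ n) {a : ℝ} (ha : 4*(n:ℝ) ≤ a) : gv n a ≤ 0 := by
  by_contra hpos
  push_neg at hpos
  have hmono : MonotoneOn (fun y => fv n y - gv n a * y) (Set.Ici a) := by
    apply monotoneOn_of_deriv_nonneg (convex_Ici _)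
    · exact fun y _ => (((hasDeriv_f n y).sub
        ((hasDerivAt_id y).const_mul (gv n a))).differentiableAt).continuousAt.continuousWithinAt
    · exact fun y _ => (((hasDeriv_f n y).sub
        ((hasDerivAt_id y).const_mul (gv n a))).differentiableAt).differentiableWithinAt
    · intro y hy
      rw [interior_Ici] at hy
      have hd : HasDerivAt (fun y => fv n y - gv n a * y) (gv n y - gv n a * 1) y :=
        (hasDeriv_f n y).sub ((hasDerivAt_id' (𝕜 := ℝ) (x := y)).const_mul (gv n a))
      rw [hd.deriv]
      have : gv n a ≤ gv n y :=
        g_mono n hn (Set.mem_Ici.2 ha) (Set.mem_Ici.2 (le_trans ha (le_of_lt hy))) (le_of_lt hy)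
      simp only [mul_one]
      linarith
  have hev : ∀ᶠ x in Filter.atTop, fv n x < 1 :=
    (f_tendsto n).eventually (gt_mem_nhds one_pos)
  obtain ⟨x, hx1, hx2⟩ := (hev.and (Filter.eventually_ge_atTop (a + 2 / gv n a))).exists
  have hxa : a ≤ x := by
    have : 0 < 2 / gv n a := by positivity
    linarith
  have hphi := hmono (Set.mem_Ici.2 le_rfl) (Set.mem_Ici.2 hxa) hxa
  simp only at hphi
  have hfa : 0 ≤ fv n a := sq_nonneg _
  have hgx : gv n a * (x - a) ≥ 2 := by
    have h1 : 2 / gv n a ≤ x - a := by linarith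
    calc (2:ℝ) = gv n a * (2 / gv n a) := by field_simp
      _ ≤ gv n a * (x - a) := by
          apply mul_le_mul_of_nonneg_left h1 (le_of_lt hpos)
  have : fv n x ≥ 2 := by nlinarith
  linarith

lemma f_anti (n : ℕ) (hn : 1 ≤ n) : AntitoneOn (fv n) (Set.Ici (4*(n:ℝ))) := by
  apply antitoneOn_of_deriv_nonpos (convex_Ici _)
  · exact fun y _ => ((hasDeriv_f n y).differentiableAt).continuousAt.continuousWithinAt
  · exact fun y _ => ((hasDeriv_f n y).differentiableAt).differentiableWithinAt
  · intro y hy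
    rw [interior_Ici] at hy
    rw [(hasDeriv_f n y).deriv]
    exact g_nonpos n hn (le_of_lt hy)

lemma main_bound (n : ℕ) (hn : 1 ≤ n) (x : ℝ) (hx : 0 ≤ x) :
    |Polynomial.eval x (lagP n)| * Real.exp (-x/2) ≤ n := by
  have hn1 : (1:ℝ) ≤ n := by exact_mod_cast hn
  rcases eq_or_lt_of_le hx with h0 | h0
  · rw [← h0]
    simp [lagP_eval_zero n hn]
  rcases le_or_gt x (4*n) with h4 | h4
  · have hv := v_bound n hn hx h4
    have : |x * Real.exp (-x/2) * Polynomial.eval x (lagP n)|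
        = x * (|Polynomial.eval x (lagP n)| * Real.exp (-x/2)) := by
      rw [abs_mul, abs_mul, abs_of_pos h0, abs_of_pos (Real.exp_pos _)]
      ring
    rw [this] at hv
    rw [mul_comm] at hv
    have hv' : (|Polynomial.eval x (lagP n)| * Real.exp (-x/2)) * x ≤ (n:ℝ) * x := by
      calc (|Polynomial.eval x (lagP n)| * Real.exp (-x/2)) * x
          = x * (|Polynomial.eval x (lagP n)| * Real.exp (-x/2)) := by ring
        _ ≤ (n:ℝ) * x := by rw [mul_comm] at hv; exact hv
    exact le_of_mul_le_mul_right hv' h0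
  · -- x > 4n
    have h4n : (0:ℝ) ≤ 4*n := by positivity
    have hf := f_anti n hn (Set.mem_Ici.2 le_rfl) (Set.mem_Ici.2 (le_of_lt h4)) (le_of_lt h4)
    have hv4 := v_bound n hn h4n le_rfl
    have hfv4 : fv n (4*n) ≤ ((n:ℝ) * (4*n))^2 := by
      have h1 : 0 ≤ (n:ℝ) * (4*n) := by positivity
      have := sq_le_sq' (by linarith [abs_nonneg (4*(n:ℝ) * Real.exp (-(4*(n:ℝ))/2) * Polynomial.eval (4*(n:ℝ)) (lagP n)), neg_abs_le (4*(n:ℝ) * Real.exp (-(4*(n:ℝ))/2) * Polynomial.eval (4*(n:ℝ)) (lagP n))] : -((n:ℝ)*(4*n)) ≤ 4*(n:ℝ) * Real.exp (-(4*(n:ℝ))/2) * Polynomial.eval (4*(n:ℝ)) (lagP n)) (by linarith [le_abs_self (4*(n:ℝ) * Real.exp (-(4*(n:ℝ))/2) * Polynomial.eval (4*(n:ℝ)) (lagP n))] : 4*(n:ℝ) * Real.exp (-(4*(n:ℝ))/2) * Polynomial.eval (4*(n:ℝ)) (lagP n) ≤ (n:ℝ)*(4*n))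
      exact this
    have hfvx : fv n x ≤ ((n:ℝ) * (4*n))^2 := le_trans hf hfv4
    have habs : |x * Real.exp (-x/2) * Polynomial.eval x (lagP n)| ≤ (n:ℝ) * (4*n) := by
      have h1 : 0 ≤ (n:ℝ) * (4*n) := by positivity
      apply abs_le_of_sq_le_sq ?_ h1
      calc (x * Real.exp (-x/2) * Polynomial.eval x (lagP n))^2 = fv n x := rfl
        _ ≤ ((n:ℝ) * (4*n))^2 := hfvx
    have hE : (|Polynomial.eval x (lagP n)| * Real.exp (-x/2)) * x ≤ (n:ℝ) * (4*n) := by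
      calc (|Polynomial.eval x (lagP n)| * Real.exp (-x/2)) * x
          = |x * Real.exp (-x/2) * Polynomial.eval x (lagP n)| := by
            rw [abs_mul, abs_mul, abs_of_pos h0, abs_of_pos (Real.exp_pos _)]; ring
        _ ≤ (n:ℝ) * (4*n) := habs
    have hnx : (n:ℝ) * (4*n) ≤ (n:ℝ) * x := by nlinarith
    have : (|Polynomial.eval x (lagP n)| * Real.exp (-x/2)) * x ≤ (n:ℝ) * x := le_trans hE hnx
    exact le_of_mul_le_mul_right this h0

/-- Bound on the associated Laguerre polynomial with parameter 1:
`|L¹_{n-1}(x)| e^{-x/2} ≤ n` for `x ≥ 0`, where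
`L¹_{n-1}(x) = Σ_{j=1}^n C(n,j) (-x)^{j-1}/(j-1)!`. -/
theorem laguerre_bound (n : ℕ) (hn : 1 ≤ n) (x : ℝ) (hx : 0 ≤ x) :
    |∑ j ∈ Finset.Icc 1 n, (n.choose j : ℝ) * (-x) ^ (j - 1) / (Nat.factorial (j - 1))| *
        Real.exp (-x / 2) ≤ n := by
  have hmain := main_bound n hn x hx
  have hsum : (∑ j ∈ Finset.Icc 1 n, (n.choose j : ℝ) * (-x) ^ (j - 1) / (Nat.factorial (j - 1)))
      = Polynomial.eval x (lagP n) := by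
    rw [← Finset.Ico_add_one_right_eq_Icc, Finset.sum_Ico_eq_sum_range]
    simp only [Nat.add_sub_cancel, Nat.succ_sub_one]
    rw [lagP, Polynomial.eval_finset_sum]
    apply Finset.sum_congr rfl
    intro k hk
    have h1 : 1 + k - 1 = k := by omega
    have h2 : 1 + k = k + 1 := by omega
    simp only [h1, Nat.add_sub_cancel, h2, Polynomial.eval_mul, Polynomial.eval_C, Polynomial.eval_pow,
      Polynomial.eval_X]
    rw [neg_pow]
    ring
  rw [hsum]
  exact hmain
end
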